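/- arXiv:1304.0069 — 3 statements merged into one kernel-verified Lean document; each statement's English description precedes it below -/
import Mathlib

section
/- Let λ ∈ [0,1) and define Q(t) = 1/(λ + (1-λ)·exp(t)) for t ≥ 0. Then Q satisfies the renewal-type integral equation Q(t) = exp(-t) + λ·∫₀ᵗ Q(t-u)²·exp(-u) du for all t ≥ 0. -/
/-- Q(t) = 1/(λ + (1-λ)e^t) satisfies the renewal-type equation
Q(t) = e^{-t} + λ ∫₀ᵗ Q(t-u)² e^{-u} du for t ≥ 0, λ ∈ [0,1). -/
theorem stmt1 (l : ℝ) (hl : l ∈ Set.Ico (0:ℝ) 1) :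
    ∀ t ≥ (0:ℝ),
      1 / (l + (1 - l) * Real.exp t)
        = Real.exp (-t)
          + l * ∫ u in (0:ℝ)..t,
              (1 / (l + (1 - l) * Real.exp (t - u)))^2 * Real.exp (-u) := by
  obtain ⟨hl0, hl1⟩ := hl
  intro t ht
  have h1l : (0:ℝ) < 1 - l := by linarith
  rcases eq_or_lt_of_le hl0 with h0 | h0
  · simp [← h0, Real.exp_neg]
  -- l > 0
  set c : ℝ := (1 - l) * Real.exp t with hc
  have hcpos : 0 < c := mul_pos h1l (Real.exp_pos t)
  have hden : ∀ u : ℝ, 0 < l * Real.exp u + c := fun u =>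
    add_pos (mul_pos h0 (Real.exp_pos u)) hcpos
  have hden2 : ∀ u : ℝ, 0 < l + (1 - l) * Real.exp (t - u) := fun u =>
    add_pos_of_nonneg_of_pos hl0 (mul_pos h1l (Real.exp_pos _))
  have key : ∀ u : ℝ, HasDerivAt (fun u => -(l * (l * Real.exp u + c))⁻¹)
      ((1 / (l + (1 - l) * Real.exp (t - u)))^2 * Real.exp (-u)) u := by
    intro u
    have h1 : HasDerivAt (fun u => l * (l * Real.exp u + c)) (l * (l * Real.exp u)) u :=
      (((Real.hasDerivAt_exp u).const_mul l).add_const c).const_mul l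
    have h2 := (h1.inv (ne_of_gt (mul_pos h0 (hden u)))).neg
    convert h2 using 1
    all_goals try rfl
    have heq : l + (1 - l) * Real.exp (t - u) = Real.exp (-u) * (l * Real.exp u + c) := by
      rw [Real.exp_sub, Real.exp_neg]
      field_simp
      rw [hc]
    rw [heq, Real.exp_neg]
    have hu := (Real.exp_pos u).ne'
    have h3 := (hden u).ne'
    field_simp
  have hcont : Continuous fun u : ℝ =>
      (1 / (l + (1 - l) * Real.exp (t - u)))^2 * Real.exp (-u) := by
    apply Continuous.mul _ (Real.continuous_exp.comp continuous_neg)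
    apply Continuous.pow
    apply Continuous.div continuous_const
    · continuity
    · exact fun u => (hden2 u).ne'
  have hint := intervalIntegral.integral_eq_sub_of_hasDerivAt
    (f := fun u => -(l * (l * Real.exp u + c))⁻¹)
    (fun u _ => key u) (hcont.intervalIntegrable 0 t)
  rw [hint]
  show 1 / (l + c) = Real.exp (-t)
    + l * (-(l * (l * Real.exp t + c))⁻¹ - -(l * (l * Real.exp 0 + c))⁻¹)
  have het := (Real.exp_pos t).ne'
  have h3 : (0:ℝ) < l + (1 - l) * Real.exp t := add_pos_of_nonneg_of_pos hl0
    (mul_pos h1l (Real.exp_pos t))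
  have h4 : l * Real.exp t + c = Real.exp t := by rw [hc]; ring
  have h5 : l * Real.exp 0 + c = l + (1 - l) * Real.exp t := by
    rw [hc, Real.exp_zero]; ring
  rw [h4, h5, Real.exp_neg, hc]
  field_simp
  ring
end

section
/- If g(s) = 1 - √(1-s) for s ∈ [0,1), then the coefficients of the power series expansion of g around 0 are nonnegative and sum to 1, i.e., g is a probability generating function of a distribution on the positive integers with P(W = k) = binom(2k-2, k-1)/(k·2^(2k-1)). -/
open Finset Nat

noncomputable def q (k : ℕ) : ℝ := (catalan k : ℝ) / 4 ^ k

lemma cbR (n : ℕ) : ((n.centralBinom : ℝ)) = (n + 1) * catalan n := by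
  rw [← succ_mul_catalan_eq_centralBinom]; push_cast; ring

lemma coeff_eq (k : ℕ) :
    (Nat.choose (2*(k+1)-2) k : ℝ) / ((k+1) * 2^(2*(k+1)-1)) = q k / 2 := by
  have h1 : 2*(k+1)-2 = 2*k := by omega
  have h2 : 2*(k+1)-1 = 2*k+1 := by omega
  have h3 : (Nat.choose (2*k) k : ℝ) = (k+1) * catalan k := by
    rw [← Nat.centralBinom_eq_two_mul_choose] at *; exact cbR k
  rw [h1, h2, h3, q]
  have : ((2:ℝ))^(2*k+1) = 2 * 4^k := by rw [pow_succ, pow_mul]; ring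
  rw [this]
  have hk : ((k:ℝ)+1) ≠ 0 := by positivity
  field_simp

lemma partial_sum (n : ℕ) :
    ∑ k ∈ range n, q k = 2 - 2 * (n.centralBinom : ℝ) / 4 ^ n := by
  induction n with
  | zero => simp [Nat.centralBinom]
  | succ n ih =>
    rw [Finset.sum_range_succ, ih]
    have hrec : ((n:ℝ)+1) * ((n+1).centralBinom : ℝ) = 2*(2*n+1) * (n.centralBinom : ℝ) := by
      have := Nat.succ_mul_centralBinom_succ n
      exact_mod_cast congrArg (Nat.cast : ℕ → ℝ) this
    have hq : q n = (n.centralBinom : ℝ) / ((n+1) * 4^n) := by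
      rw [q, cbR n]
      have : ((n:ℝ)+1) ≠ 0 := by positivity
      field_simp
    have h4 : ((4:ℝ))^(n+1) = 4 * 4^n := by ring
    have hn1 : ((n:ℝ)+1) ≠ 0 := by positivity
    have h4n : ((4:ℝ))^n ≠ 0 := by positivity
    rw [hq, h4]
    field_simp
    nlinarith [hrec, sq_nonneg ((4:ℝ)^n)]

lemma cb_sq_le (n : ℕ) : ((n:ℝ)+1) * (n.centralBinom : ℝ)^2 ≤ 16 ^ n := by
  induction n with
  | zero => simp [Nat.centralBinom]
  | succ n ih =>
    have hrec : ((n:ℝ)+1) * ((n+1).centralBinom : ℝ) = 2*(2*n+1) * (n.centralBinom : ℝ) := by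
      exact_mod_cast congrArg (Nat.cast : ℕ → ℝ) (Nat.succ_mul_centralBinom_succ n)
    have hn1 : (0:ℝ) < (n:ℝ)+1 := by positivity
    have hcb : (0:ℝ) ≤ (n.centralBinom : ℝ) := by positivity
    have key : ((n:ℝ)+2) * (2*(n:ℝ)+1)^2 ≤ 4 * ((n:ℝ)+1)^3 := by nlinarith [Nat.cast_nonneg (α := ℝ) n]
    have h16 : ((16:ℝ))^(n+1) = 16 * 16^n := by ring
    set c := (n.centralBinom : ℝ) with hc
    set d := ((n+1).centralBinom : ℝ) with hd
    have hd2 : ((n:ℝ)+1)^2 * d^2 = 4*(2*(n:ℝ)+1)^2*c^2 := by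
      linear_combination (((n:ℝ)+1)*d + 2*(2*(n:ℝ)+1)*c) * hrec
    have step1 : ((n:ℝ)+2) * (((n:ℝ)+1)^2 * d^2) ≤ 16*((n:ℝ)+1)^2*(((n:ℝ)+1)*c^2) := by
      rw [hd2]; nlinarith [key, sq_nonneg c]
    have step2 : 16*((n:ℝ)+1)^2*(((n:ℝ)+1)*c^2) ≤ 16*((n:ℝ)+1)^2*16^n := by
      have h2 : (0:ℝ) ≤ 16*((n:ℝ)+1)^2 := by positivity
      exact mul_le_mul_of_nonneg_left ih h2
    have h3 : (0:ℝ) < ((n:ℝ)+1)^2 := by positivity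
    have final : ((n:ℝ)+1)^2 * (((n:ℝ)+2) * d^2) ≤ ((n:ℝ)+1)^2 * (16*16^n) := by
      nlinarith [step1, step2]
    have : ((n:ℝ)+2) * d^2 ≤ 16*16^n := (mul_le_mul_iff_right₀ h3).mp final
    push_cast
    rw [h16]
    convert this using 1 <;> ring

lemma q_nonneg (k : ℕ) : 0 ≤ q k := by rw [q]; positivity

lemma tend0 : Filter.Tendsto (fun n : ℕ => (n.centralBinom : ℝ) / 4 ^ n)
    Filter.atTop (nhds 0) := by
  have hb : ∀ n : ℕ, (n.centralBinom : ℝ) / 4 ^ n ≤ Real.sqrt (1 / ((n:ℝ)+1)) := by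
    intro n
    have h1 : ((n.centralBinom : ℝ) / 4 ^ n) ^ 2 ≤ 1 / ((n:ℝ)+1) := by
      have h16 : ((16:ℝ))^n = (4^n)^2 := by
        rw [show (16:ℝ) = 4^2 from by norm_num, ← pow_mul, ← pow_mul, Nat.mul_comm]
      have := cb_sq_le n
      have hn1 : (0:ℝ) < (n:ℝ)+1 := by positivity
      have h4 : (0:ℝ) < (4:ℝ)^n := by positivity
      rw [div_pow, div_le_div_iff₀ (by positivity) hn1]
      nlinarith [this]
    calc (n.centralBinom : ℝ) / 4 ^ n = Real.sqrt (((n.centralBinom : ℝ) / 4 ^ n)^2) := by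
          rw [Real.sqrt_sq (by positivity)]
      _ ≤ Real.sqrt (1 / ((n:ℝ)+1)) := Real.sqrt_le_sqrt h1
  have hs : Filter.Tendsto (fun n : ℕ => Real.sqrt (1 / ((n:ℝ)+1)))
      Filter.atTop (nhds 0) := by
    have h := (Real.continuous_sqrt.tendsto 0).comp tendsto_one_div_add_atTop_nhds_zero_nat
    simpa only [Function.comp_def, Real.sqrt_zero] using h
  exact squeeze_zero (fun n => by positivity) hb hs

lemma hasSum_q : HasSum q 2 := by
  rw [hasSum_iff_tendsto_nat_of_nonneg q_nonneg]
  simp only [partial_sum]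
  have : Filter.Tendsto (fun n : ℕ => 2 - 2 * ((n.centralBinom : ℝ) / 4 ^ n))
      Filter.atTop (nhds (2 - 2 * 0)) := Filter.Tendsto.const_sub _ (tend0.const_mul 2)
  simpa [mul_div_assoc] using this


/-- The coefficients of g(s) = 1 - √(1-s) are the probabilities
P(W = k) = C(2k-2, k-1)/(k·2^(2k-1)), k ≥ 1: they are nonnegative, sum to 1,
and their generating function is g on [0,1). -/
theorem stmt3 :
    (∀ k : ℕ, 1 ≤ k →
      0 ≤ (Nat.choose (2*k-2) (k-1) : ℝ) / (k * 2^(2*k-1))) ∧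
    (∑' k : ℕ, (Nat.choose (2*(k+1)-2) k : ℝ) / ((k+1) * 2^(2*(k+1)-1)) = 1) ∧
    (∀ s ∈ Set.Ico (0:ℝ) 1,
      ∑' k : ℕ, ((Nat.choose (2*(k+1)-2) k : ℝ) / ((k+1) * 2^(2*(k+1)-1))) * s^(k+1)
        = 1 - Real.sqrt (1 - s)) := by
  have hq2 : HasSum (fun k => q k / 2) 1 := by simpa using hasSum_q.div_const 2
  refine ⟨fun k hk => by positivity, ?_, ?_⟩
  · simp only [coeff_eq]
    exact hq2.tsum_eq
  · rintro s ⟨hs0, hs1⟩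
    simp only [coeff_eq]
    set f : ℕ → ℝ := fun k => q k / 2 * s ^ (k+1) with hf
    have hfnn : ∀ k, 0 ≤ f k := fun k => by
      have := q_nonneg k; simp only [hf]; positivity
    have hfle : ∀ k, f k ≤ q k / 2 := fun k => by
      have h1 : s ^ (k+1) ≤ 1 := pow_le_one₀ hs0 (le_of_lt hs1)
      have := q_nonneg k
      calc f k ≤ q k / 2 * 1 := by apply mul_le_mul_of_nonneg_left h1; positivity
        _ = q k / 2 := mul_one _
    have hsumf : Summable f := Summable.of_nonneg_of_le hfnn hfle hq2.summable
    set A := ∑' k, f k with hA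
    -- A ≤ 1
    have hAle : A ≤ 1 := by
      rw [hA, ← hq2.tsum_eq]
      exact Summable.tsum_le_tsum hfle hsumf hq2.summable
    have hA0 : 0 ≤ A := tsum_nonneg hfnn
    -- Cauchy product
    have hnorm : Summable fun k => ‖f k‖ := by
      simpa [Real.norm_of_nonneg (hfnn _)] using hsumf
    have hCauchy : A * A = ∑' n, ∑ kl ∈ Finset.HasAntidiagonal.antidiagonal n, f kl.1 * f kl.2 :=
      tsum_mul_tsum_eq_tsum_sum_antidiagonal_of_summable_norm hnorm hnorm
    have hinner : ∀ n : ℕ, ∑ kl ∈ Finset.HasAntidiagonal.antidiagonal n, f kl.1 * f kl.2 = 2 * f (n+1) := by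
      intro n
      have h1 : ∀ kl ∈ Finset.HasAntidiagonal.antidiagonal n,
          f kl.1 * f kl.2 = (catalan kl.1 : ℝ) * (catalan kl.2 : ℝ) * (s^(n+2) / (4 * 4^n)) := by
        rintro ⟨i, j⟩ hij
        rw [Finset.HasAntidiagonal.mem_antidiagonal] at hij
        simp only [hf, q]
        have hij' : i + j = n := hij
        have hpow : (4:ℝ)^i * 4^j = 4^n := by rw [← pow_add, hij']
        have hspow : s^(i+1) * s^(j+1) = s^(n+2) := by rw [← pow_add]; congr 1; omega
        field_simp
        rw [← hpow, ← hspow]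
        ring
      rw [Finset.sum_congr rfl h1, ← Finset.sum_mul]
      have h2 : ∑ kl ∈ Finset.HasAntidiagonal.antidiagonal n, (catalan kl.1 : ℝ) * (catalan kl.2 : ℝ)
          = (catalan (n+1) : ℝ) := by
        rw [catalan_succ']
        push_cast
        rfl
      rw [h2]
      simp only [hf, q]
      have : (4:ℝ)^(n+1) = 4 * 4^n := by ring
      rw [this]
      ring
    have hshift : ∑' n, f (n+1) = A - f 0 := by
      have := Summable.tsum_eq_zero_add hsumf
      rw [← hA] at this
      linarith [this]
    have hf0 : f 0 = s / 2 := by simp [hf, q]; try ring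
    have hsum_shift : Summable fun n => f (n+1) := (summable_nat_add_iff 1).mpr hsumf
    have hfe : A * A = 2 * A - s := by
      rw [hCauchy]
      calc ∑' n, ∑ kl ∈ Finset.HasAntidiagonal.antidiagonal n, f kl.1 * f kl.2
          = ∑' n, 2 * f (n+1) := by exact tsum_congr hinner
        _ = 2 * ∑' n, f (n+1) := by rw [tsum_mul_left]
        _ = 2 * (A - f 0) := by rw [hshift]
        _ = 2 * A - s := by rw [hf0]; ring
    have hsq : (1 - A)^2 = 1 - s := by nlinarith [hfe]
    have : Real.sqrt (1 - s) = 1 - A := by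
      rw [← hsq, Real.sqrt_sq (by linarith)]
    rw [this]; ring
end

section
/- Suppose offspring distributions q_m satisfy Σ k·q_m(k) = 1+η_m with η_m → 0, Σ k(k−1)q_m(k) → σ² ∈ (0,∞), sup_m Σ_{k≥n} k²q_m(k) → 0 as n → ∞, and mutation probabilities π_m → 0. Then the mean number M_m of wild-type offspring of a marked particle satisfies M_m → σ², where μ_m·M_m = Σ_{k≥1} k·Σ_{l≥1} q_m(k+l)·binom(k+l,l)·(1−π_m)^k·π_m^l and μ_m = Σ_{k≥1} q_m(k)(1 − (1−π_m)^k). -/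
open Filter Topology Finset

lemma L1 (x y : ℝ) (m : ℕ) :
    ∑ j ∈ Finset.range (m+1), (j:ℝ) * (Nat.choose m j : ℝ) * x^j * y^(m-j)
      = (m:ℝ) * x * (x+y)^(m-1) := by
  cases m with
  | zero => simp
  | succ s =>
    rw [Finset.sum_range_succ']
    have key : ∀ i ∈ Finset.range (s+1),
        ((i+1:ℕ):ℝ) * (Nat.choose (s+1) (i+1) : ℝ) * x^(i+1) * y^(s+1-(i+1))
        = ((s+1:ℕ):ℝ) * x * ((Nat.choose s i : ℝ) * x^i * y^(s-i)) := by
      intro i hi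
      have h' : ((s+1) * Nat.choose s i : ℕ) = (Nat.choose (s+1) (i+1) * (i+1) : ℕ) :=
        Nat.add_one_mul_choose_eq s i
      have hc : ((s:ℝ)+1) * (Nat.choose s i : ℝ) = (Nat.choose (s+1) (i+1) : ℝ) * ((i:ℝ)+1) := by
        exact_mod_cast congrArg (Nat.cast (R := ℝ)) h'
      have he : (s+1) - (i+1) = s - i := by omega
      rw [he]
      push_cast
      linear_combination x^(i+1) * y^(s-i) * hc.symm
    rw [Finset.sum_congr rfl key, ← Finset.mul_sum]
    have hs : ∑ i ∈ Finset.range (s+1), (Nat.choose s i:ℝ) * x^i * y^(s-i) = (x+y)^s := by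
      rw [add_pow]
      exact Finset.sum_congr rfl (fun i hi => by ring)
    rw [hs]
    push_cast
    ring


lemma L2 (x y : ℝ) (hxy : x + y = 1) (n : ℕ) :
    ∑ kl ∈ Finset.HasAntidiagonal.antidiagonal n,
        ((kl.1+1:ℕ):ℝ) * (Nat.choose ((kl.1+1)+(kl.2+1)) (kl.2+1) : ℝ) * x^(kl.1+1) * y^(kl.2+1)
      = ((n+2:ℕ):ℝ) * x * (1 - x^(n+1)) := by
  rw [Finset.Nat.sum_antidiagonal_eq_sum_range_succ_mk]
  have key : ∀ k ∈ Finset.range (n+1),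
      ((k+1:ℕ):ℝ) * (Nat.choose ((k+1)+((n-k)+1)) ((n-k)+1) : ℝ) * x^(k+1) * y^((n-k)+1)
      = ((k+1:ℕ):ℝ) * (Nat.choose (n+2) (k+1) : ℝ) * x^(k+1) * y^((n+1)-k) := by
    intro k hk
    rw [Finset.mem_range] at hk
    have h1 : (k+1)+((n-k)+1) = n+2 := by omega
    have h2 : (n+1) - k = (n-k)+1 := by omega
    have h3 : Nat.choose (n+2) ((n-k)+1) = Nat.choose (n+2) (k+1) := by
      rw [← Nat.choose_symm (by omega : k+1 ≤ n+2)]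
      congr 1
      omega
    rw [h1, h2, h3]
  rw [Finset.sum_congr rfl key]
  have full := L1 x y (n+2)
  rw [Finset.sum_range_succ, Finset.sum_range_succ'] at full
  rw [hxy, one_pow, mul_one] at full
  have h0 : ((0:ℕ):ℝ) * (Nat.choose (n+2) 0 : ℝ) * x^0 * y^((n+2)-0) = 0 := by simp
  have hsub : (n+2) - (n+2) = 0 := by omega
  rw [h0, add_zero, hsub, Nat.choose_self] at full
  simp only [Nat.cast_one, pow_zero, mul_one] at full
  push_cast at full ⊢
  have hp : x^(n+2) = x * x^(n+1) := by ring
  linear_combination full + ((n:ℝ)+2) * hp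


lemma L4a (p : ℝ) (hp0 : 0 ≤ p) (hp1 : p ≤ 1) (j : ℕ) :
    1 - (1-p)^j ≤ j * p := by
  have := one_add_mul_le_pow (by linarith : (-2:ℝ) ≤ -p) j
  simp only [mul_neg, ← sub_eq_add_neg] at this
  nlinarith [this]


lemma L4b (p : ℝ) (hp0 : 0 ≤ p) (hp1 : p ≤ 1) (j : ℕ) :
    (j:ℝ) * p - (j:ℝ)^2 * p^2 ≤ 1 - (1-p)^j := by
  have hgeom : (∑ i ∈ Finset.range j, (1-p)^i) * ((1-p) - 1) = (1-p)^j - 1 :=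
    geom_sum_mul (1-p) j
  have hsum : 1 - (1-p)^j = p * ∑ i ∈ Finset.range j, (1-p)^i := by
    nlinarith [hgeom]
  have hlow : (j:ℝ) - (j:ℝ)^2 * p ≤ ∑ i ∈ Finset.range j, (1-p)^i := by
    have h1 : ∀ i ∈ Finset.range j, 1 - (i:ℝ)*p ≤ (1-p)^i := by
      intro i hi
      have := one_add_mul_le_pow (by linarith : (-2:ℝ) ≤ -p) i
      simp only [mul_neg, ← sub_eq_add_neg] at this
      linarith [this]
    have h2 := Finset.sum_le_sum h1
    have h3 : ∑ i ∈ Finset.range j, (1 - (i:ℝ)*p) = j - (∑ i ∈ Finset.range j, (i:ℝ)) * p := by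
      rw [Finset.sum_sub_distrib]
      simp [Finset.sum_mul]
    have h4 : ∑ i ∈ Finset.range j, (i:ℝ) ≤ (j:ℝ)^2 := by
      calc ∑ i ∈ Finset.range j, (i:ℝ) ≤ ∑ i ∈ Finset.range j, (j:ℝ) := by
            apply Finset.sum_le_sum
            intro i hi
            exact_mod_cast Nat.cast_le.mpr (le_of_lt (Finset.mem_range.mp hi))
        _ = (j:ℝ) * j := by simp [mul_comm]
        _ = (j:ℝ)^2 := by ring
      
    nlinarith [h2, h3, h4]
  rw [hsum]
  nlinarith [hlow]


lemma L4c (p : ℝ) (hp0 : 0 ≤ p) (hp1 : p ≤ 1) (j : ℕ) :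
    0 ≤ 1 - (1-p)^j ∧ 1 - (1-p)^j ≤ 1 := by
  constructor
  · have : (1-p)^j ≤ 1 := pow_le_one₀ (by linarith) (by linarith)
    linarith
  · have : 0 ≤ (1-p)^j := pow_nonneg (by linarith) j
    linarith


lemma L3 (q : ℕ → ℝ) (hq : ∀ k, 0 ≤ q k) (p : ℝ) (hp0 : 0 ≤ p) (hp1 : p ≤ 1)
    (hS : Summable (fun n : ℕ => (n:ℝ)^2 * q n)) :
    ∑' (k : ℕ), ∑' (l : ℕ), ((k+1 : ℕ):ℝ) * q ((k+1)+(l+1))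
        * (Nat.choose ((k+1)+(l+1)) (l+1) : ℝ) * (1 - p)^(k+1) * p^(l+1)
      = ∑' (n : ℕ), q n * ((n:ℝ) * (1-p) * (1 - (1-p)^(n-1))) := by
  set x := 1 - p with hx
  have hx0 : 0 ≤ x := by simp [hx]; linarith
  have hx1 : x ≤ 1 := by simp [hx]; linarith
  set f : ℕ × ℕ → ℝ := fun kl => ((kl.1+1 : ℕ):ℝ) * q ((kl.1+1)+(kl.2+1))
        * (Nat.choose ((kl.1+1)+(kl.2+1)) (kl.2+1) : ℝ) * x^(kl.1+1) * p^(kl.2+1) with hf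
  have hfnn : ∀ kl, 0 ≤ f kl := by
    intro kl
    have h1 : (0:ℝ) ≤ x^(kl.1+1) := pow_nonneg hx0 _
    have h2 : (0:ℝ) ≤ p^(kl.2+1) := pow_nonneg hp0 _
    have h3 := hq ((kl.1+1)+(kl.2+1))
    positivity
  set g : ℕ → ℝ := fun n => q n * ((n:ℝ) * x * (1 - x^(n-1))) with hg
  have hgnn : ∀ n, 0 ≤ g n := by
    intro n
    apply mul_nonneg (hq n)
    apply mul_nonneg (mul_nonneg (by positivity) hx0)
    have : x^(n-1) ≤ 1 := pow_le_one₀ hx0 hx1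
    linarith
  have hgle : ∀ n, g n ≤ (n:ℝ)^2 * q n := by
    intro n
    have hxp : 0 ≤ x^(n-1) := pow_nonneg hx0 _
    have hn : (n:ℝ) ≤ (n:ℝ)^2 := by
      rcases Nat.eq_zero_or_pos n with h | h
      · simp [h]
      · have : (1:ℝ) ≤ n := by exact_mod_cast h
        nlinarith
    have hnx : (n:ℝ) * x ≤ (n:ℝ) := mul_le_of_le_one_right (Nat.cast_nonneg n) hx1
    have hnx0 : 0 ≤ (n:ℝ) * x := mul_nonneg (Nat.cast_nonneg n) hx0
    have h1 : (n:ℝ) * x * (1 - x^(n-1)) ≤ (n:ℝ)^2 := by nlinarith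
    calc g n ≤ q n * (n:ℝ)^2 := mul_le_mul_of_nonneg_left h1 (hq n)
      _ = (n:ℝ)^2 * q n := mul_comm _ _
  have hgsum : Summable g := Summable.of_nonneg_of_le hgnn hgle hS
  have hanti : ∀ n : ℕ, ∑ kl ∈ Finset.HasAntidiagonal.antidiagonal n, f kl = g (n+2) := by
    intro n
    have step : ∀ kl ∈ Finset.HasAntidiagonal.antidiagonal n, f kl
        = q (n+2) * (((kl.1+1:ℕ):ℝ) * (Nat.choose ((kl.1+1)+(kl.2+1)) (kl.2+1) : ℝ)
            * x^(kl.1+1) * p^(kl.2+1)) := by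
      intro kl hkl
      rw [Finset.HasAntidiagonal.mem_antidiagonal] at hkl
      have harg : (kl.1+1)+(kl.2+1) = n+2 := by omega
      simp only [hf]
      rw [harg]
      ring
    rw [Finset.sum_congr rfl step, ← Finset.mul_sum, L2 x p (by simp [hx]) n]
    simp only [hg]
    have h1 : (n+2) - 1 = n+1 := by omega
    rw [h1]
  set F : ℕ × ℕ → ENNReal := fun kl => ENNReal.ofReal (f kl) with hF
  have keyENN : ∑' (kl : ℕ × ℕ), F kl = ∑' (n : ℕ), ENNReal.ofReal (g (n+2)) := by
    rw [← Finset.HasAntidiagonal.sigmaAntidiagonalEquivProd.tsum_eq F]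
    rw [ENNReal.tsum_sigma' (fun x => F (Finset.HasAntidiagonal.sigmaAntidiagonalEquivProd x))]
    apply tsum_congr
    intro n
    have : ∀ b : Finset.HasAntidiagonal.antidiagonal n,
        F (Finset.HasAntidiagonal.sigmaAntidiagonalEquivProd ⟨n, b⟩) = F (b : ℕ × ℕ) := fun b => rfl
    rw [tsum_congr this, Finset.tsum_subtype (Finset.HasAntidiagonal.antidiagonal n) F]
    rw [show (∑ kl ∈ Finset.HasAntidiagonal.antidiagonal n, F kl) = ENNReal.ofReal (∑ kl ∈ Finset.HasAntidiagonal.antidiagonal n, f kl)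
      from (ENNReal.ofReal_sum_of_nonneg (fun i _ => hfnn i)).symm]
    rw [hanti n]
  have hgsum1 : Summable (fun n => g (n+1)) := (summable_nat_add_iff 1).mpr hgsum
  have hgsum2 : Summable (fun n => g (n+2)) := (summable_nat_add_iff 2).mpr hgsum
  have hENNg : ∑' (n : ℕ), ENNReal.ofReal (g (n+2)) = ENNReal.ofReal (∑' n, g (n+2)) :=
    (ENNReal.ofReal_tsum_of_nonneg (fun n => hgnn _) hgsum2).symm
  have hfin : ∑' (kl : ℕ × ℕ), F kl ≠ ⊤ := by
    rw [keyENN, hENNg]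
    exact ENNReal.ofReal_ne_top
  have hfin' : ∑' (k : ℕ), ∑' (l : ℕ), F (k, l) ≠ ⊤ := by
    rw [← ENNReal.tsum_prod']
    exact hfin
  have hLHS : ∑' (k : ℕ), ∑' (l : ℕ), f (k, l) = (∑' (kl : ℕ × ℕ), F kl).toReal := by
    rw [ENNReal.tsum_prod']
    rw [ENNReal.tsum_toReal_eq (f := fun k => ∑' (l : ℕ), F (k, l)) (fun k =>
      ne_top_of_le_ne_top hfin' (ENNReal.le_tsum (f := fun k => ∑' (l : ℕ), F (k, l)) k))]
    apply tsum_congr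
    intro k
    rw [ENNReal.tsum_toReal_eq (fun l => ENNReal.ofReal_ne_top)]
    apply tsum_congr
    intro l
    exact (ENNReal.toReal_ofReal (hfnn (k, l))).symm
  have hg0 : g 0 = 0 := by simp [hg]
  have hg1 : g 1 = 0 := by simp [hg]
  have hRHS : ∑' n, g n = ∑' n, g (n+2) := by
    rw [Summable.tsum_eq_zero_add hgsum, Summable.tsum_eq_zero_add hgsum1, hg0, hg1, zero_add, zero_add]
  calc ∑' (k : ℕ), ∑' (l : ℕ), ((k+1 : ℕ):ℝ) * q ((k+1)+(l+1))
        * (Nat.choose ((k+1)+(l+1)) (l+1) : ℝ) * (1 - p)^(k+1) * p^(l+1)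
      = ∑' (k : ℕ), ∑' (l : ℕ), f (k, l) := rfl
    _ = (∑' (kl : ℕ × ℕ), F kl).toReal := hLHS
    _ = (ENNReal.ofReal (∑' n, g (n+2))).toReal := by rw [keyENN, hENNg]
    _ = ∑' n, g (n+2) := ENNReal.toReal_ofReal (tsum_nonneg (fun n => hgnn _))
    _ = ∑' n, g n := hRHS.symm


lemma Dub (q : ℕ → ℝ) (p : ℝ) (hq : ∀ k, 0 ≤ q k) (hp0 : 0 ≤ p) (hp1 : p ≤ 1)
    (hq0 : Summable q) (hS1 : Summable (fun k : ℕ => (k:ℝ) * q k)) :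
    ∑' k : ℕ, q k * (1 - (1-p)^k) ≤ p * ∑' k : ℕ, (k:ℝ) * q k := by
  have hDs : Summable (fun k : ℕ => q k * (1 - (1-p)^k)) := by
    apply Summable.of_nonneg_of_le (fun k => mul_nonneg (hq k) (L4c p hp0 hp1 k).1)
      (fun k => ?_) hq0
    nlinarith [(L4c p hp0 hp1 k).2, hq k]
  rw [← tsum_mul_left]
  apply Summable.tsum_le_tsum (fun k => ?_) hDs (hS1.mul_left p)
  have := L4a p hp0 hp1 k
  nlinarith [hq k]

lemma Dlb (q : ℕ → ℝ) (p : ℝ) (hq : ∀ k, 0 ≤ q k) (hp0 : 0 ≤ p) (hp1 : p ≤ 1)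
    (hq0 : Summable q) (hS1 : Summable (fun k : ℕ => (k:ℝ) * q k))
    (hS2 : Summable (fun k : ℕ => (k:ℝ)^2 * q k)) :
    p * (∑' k : ℕ, (k:ℝ) * q k) - p^2 * (∑' k : ℕ, (k:ℝ)^2 * q k)
      ≤ ∑' k : ℕ, q k * (1 - (1-p)^k) := by
  have hDs : Summable (fun k : ℕ => q k * (1 - (1-p)^k)) := by
    apply Summable.of_nonneg_of_le (fun k => mul_nonneg (hq k) (L4c p hp0 hp1 k).1)
      (fun k => ?_) hq0
    nlinarith [(L4c p hp0 hp1 k).2, hq k]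
  rw [← tsum_mul_left, ← tsum_mul_left, ← Summable.tsum_sub (hS1.mul_left p) (hS2.mul_left (p^2))]
  apply Summable.tsum_le_tsum (fun k => ?_) ((hS1.mul_left p).sub (hS2.mul_left (p^2))) hDs
  have := L4b p hp0 hp1 k
  nlinarith [hq k]


lemma WsummandSummable (q : ℕ → ℝ) (p : ℝ) (hq : ∀ k, 0 ≤ q k) (hp0 : 0 ≤ p) (hp1 : p ≤ 1)
    (hS2 : Summable (fun k : ℕ => (k:ℝ)^2 * q k)) :
    Summable (fun n : ℕ => q n * ((n:ℝ) * (1 - (1-p)^(n-1)))) := by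
  apply Summable.of_nonneg_of_le
    (fun n => mul_nonneg (hq n) (mul_nonneg (Nat.cast_nonneg n) (L4c p hp0 hp1 _).1))
    (fun n => ?_) hS2
  have h1 := (L4c p hp0 hp1 (n-1)).2
  have h2 := (L4c p hp0 hp1 (n-1)).1
  have hn : (n:ℝ) ≤ (n:ℝ)^2 := by
    rcases Nat.eq_zero_or_pos n with h | h
    · simp [h]
    · have : (1:ℝ) ≤ n := by exact_mod_cast h
      nlinarith
  have a1 : (n:ℝ)*(1 - (1-p)^(n-1)) ≤ (n:ℝ) := by
    nlinarith [(Nat.cast_nonneg n : (0:ℝ) ≤ n)]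
  have a2 : q n * ((n:ℝ)*(1-(1-p)^(n-1))) ≤ q n * n := mul_le_mul_of_nonneg_left a1 (hq n)
  have a3 : q n * (n:ℝ) ≤ (n:ℝ)^2 * q n := by nlinarith [hq n]
  linarith


lemma Wub (q : ℕ → ℝ) (p : ℝ) (hq : ∀ k, 0 ≤ q k) (hp0 : 0 ≤ p) (hp1 : p ≤ 1)
    (hS2 : Summable (fun k : ℕ => (k:ℝ)^2 * q k))
    (hSV : Summable (fun k : ℕ => (k:ℝ) * ((k:ℝ)-1) * q k)) :
    ∑' n : ℕ, q n * ((n:ℝ) * (1 - (1-p)^(n-1)))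
      ≤ p * ∑' k : ℕ, (k:ℝ) * ((k:ℝ)-1) * q k := by
  rw [← tsum_mul_left]
  apply Summable.tsum_le_tsum (fun n => ?_) (WsummandSummable q p hq hp0 hp1 hS2) (hSV.mul_left p)
  rcases n with _ | j
  · simp
  · have hL := L4a p hp0 hp1 j
    have he : (j+1) - 1 = j := rfl
    rw [he]
    push_cast
    have b1 : (0:ℝ) ≤ ((j:ℝ)+1) * q (j+1) :=
      mul_nonneg (by positivity) (hq (j+1))
    nlinarith [mul_le_mul_of_nonneg_left hL b1]


lemma Wlb (q : ℕ → ℝ) (p : ℝ) (hq : ∀ k, 0 ≤ q k) (hp0 : 0 ≤ p) (hp1 : p ≤ 1)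
    (hq0 : Summable q) (hq0' : ∑' k, q k = 1)
    (hS2 : Summable (fun k : ℕ => (k:ℝ)^2 * q k))
    (hSV : Summable (fun k : ℕ => (k:ℝ) * ((k:ℝ)-1) * q k))
    (n₀ : ℕ) (ε : ℝ) (hε : 0 ≤ ε)
    (htail : (∑' k : ℕ, (if n₀ ≤ k then (k:ℝ)^2 * q k else 0)) ≤ ε) :
    p * (∑' k : ℕ, (k:ℝ) * ((k:ℝ)-1) * q k) - p^2 * (n₀:ℝ)^3 - p * ε
      ≤ ∑' n : ℕ, q n * ((n:ℝ) * (1 - (1-p)^(n-1))) := by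
  set t : ℕ → ℝ := fun k => if n₀ ≤ k then (k:ℝ)^2 * q k else 0 with ht
  have htnn : ∀ k, 0 ≤ t k := by
    intro k
    simp only [ht]
    split
    · exact mul_nonneg (by positivity) (hq k)
    · exact le_refl 0
  have htle : ∀ k, t k ≤ (k:ℝ)^2 * q k := by
    intro k
    simp only [ht]
    split
    · exact le_refl _
    · exact mul_nonneg (by positivity) (hq k)
  have hts : Summable t := Summable.of_nonneg_of_le htnn htle hS2
  have hWs := WsummandSummable q p hq hp0 hp1 hS2
  have hW0 : ∀ n : ℕ, 0 ≤ q n * ((n:ℝ) * (1 - (1-p)^(n-1))) :=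
    fun n => mul_nonneg (hq n) (mul_nonneg (Nat.cast_nonneg n) (L4c p hp0 hp1 _).1)
  set E : ℕ → ℝ := fun n => p * ((n:ℝ)*((n:ℝ)-1)*q n) - q n * ((n:ℝ)*(1-(1-p)^(n-1))) with hE
  have hEs : Summable E := (hSV.mul_left p).sub hWs
  have hEb : ∀ n, E n ≤ p^2*(n₀:ℝ)^3*q n + p * t n := by
    intro n
    by_cases hc : n₀ ≤ n
    · have ht' : t n = (n:ℝ)^2 * q n := by simp only [ht]; rw [if_pos hc]
      have h1 : E n ≤ p * ((n:ℝ)*((n:ℝ)-1)*q n) := by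
        simp only [hE]
        linarith [hW0 n]
      have h2 : (n:ℝ)*((n:ℝ)-1) * q n ≤ (n:ℝ)^2 * q n := by
        nlinarith [hq n, (Nat.cast_nonneg n : (0:ℝ) ≤ n)]
      rw [ht']
      nlinarith [mul_nonneg (mul_nonneg (sq_nonneg p) (by positivity : (0:ℝ) ≤ (n₀:ℝ)^3)) (hq n), mul_le_mul_of_nonneg_left h2 hp0]
    · have ht' : t n = 0 := by simp only [ht]; rw [if_neg hc]
      rw [ht', mul_zero, add_zero]
      rcases n with _ | j
      · simp only [hE]
        have := mul_nonneg (mul_nonneg (sq_nonneg p) (by positivity : (0:ℝ) ≤ (n₀:ℝ)^3)) (hq 0)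
        simp
        nlinarith [this]
      · have hL := L4b p hp0 hp1 j
        have he : (j+1) - 1 = j := rfl
        have hjn : ((j:ℝ)+1) ≤ (n₀:ℝ) := by
          have : j+1 ≤ n₀ := by omega
          exact_mod_cast this
        have hj0 : (0:ℝ) ≤ j := Nat.cast_nonneg j
        have ha : (0:ℝ) ≤ q (j+1) := hq (j+1)
        simp only [hE, he]
        push_cast
        have step1 : (q (j+1) * ((j:ℝ)+1)) * ((j:ℝ)*p - (j:ℝ)^2*p^2)
            ≤ (q (j+1) * ((j:ℝ)+1)) * (1-(1-p)^j) :=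
          mul_le_mul_of_nonneg_left hL (by positivity)
        have hn₀0 : (0:ℝ) ≤ (n₀:ℝ) := Nat.cast_nonneg _
        have c1 : ((j:ℝ)+1)*(j:ℝ)^2 ≤ (n₀:ℝ)*(j:ℝ)^2 := mul_le_mul_of_nonneg_right hjn (sq_nonneg _)
        have c2 : (j:ℝ)^2 ≤ (n₀:ℝ)^2 := by nlinarith
        have c3 : (n₀:ℝ)*(j:ℝ)^2 ≤ (n₀:ℝ)*(n₀:ℝ)^2 := mul_le_mul_of_nonneg_left c2 hn₀0
        have h2 : ((j:ℝ)+1)*(j:ℝ)^2 ≤ (n₀:ℝ)^3 := by nlinarith [c1, c3]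
        have h3 : (((j:ℝ)+1)*(j:ℝ)^2) * (p^2 * q (j+1)) ≤ (n₀:ℝ)^3 * (p^2 * q (j+1)) :=
          mul_le_mul_of_nonneg_right h2 (by positivity)
        nlinarith [step1, h3]
  have hbs : Summable (fun n => p^2*(n₀:ℝ)^3*q n + p * t n) :=
    (hq0.mul_left _).add (hts.mul_left p)
  have h1 : ∑' n, E n ≤ ∑' n, (p^2*(n₀:ℝ)^3*q n + p * t n) := Summable.tsum_le_tsum hEb hEs hbs
  have h2 : ∑' n, (p^2*(n₀:ℝ)^3*q n + p * t n) = p^2*(n₀:ℝ)^3 + p * ∑' k, t k := by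
    rw [Summable.tsum_add (hq0.mul_left _) (hts.mul_left p), tsum_mul_left, tsum_mul_left, hq0', mul_one]
  have h3 : ∑' n, E n = p * (∑' k : ℕ, (k:ℝ) * ((k:ℝ)-1) * q k)
      - ∑' n : ℕ, q n * ((n:ℝ) * (1 - (1-p)^(n-1))) := by
    simp only [hE]
    rw [Summable.tsum_sub (hSV.mul_left p) hWs, tsum_mul_left]
  have h4 : p * ∑' k, t k ≤ p * ε := mul_le_mul_of_nonneg_left htail hp0
  linarith

/-- In the binomial mutation model the mean number M_m of wild-type offspring
of a marked particle converges to σ². -/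
theorem stmt16 (q : ℕ → ℕ → ℝ) (π : ℕ → ℝ) (η : ℕ → ℝ) (σ : ℝ) (hσ : 0 < σ)
    (hq : ∀ m k, 0 ≤ q m k) (h1 : ∀ m, ∑' k : ℕ, q m k = 1)
    (hπpos : ∀ m, π m ∈ Set.Ioo (0:ℝ) 1)
    (hπ : Tendsto π atTop (nhds 0))
    (hmean : ∀ m, ∑' k : ℕ, (k:ℝ) * q m k = 1 + η m)
    (hη : Tendsto η atTop (nhds 0))
    (hvar : Tendsto (fun m => ∑' k : ℕ, (k:ℝ) * ((k:ℝ) - 1) * q m k)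
      atTop (nhds (σ^2)))
    (hui : ∀ δ > (0:ℝ), ∃ n : ℕ, ∀ m,
      (∑' k : ℕ, (if n ≤ k then (k:ℝ)^2 * q m k else 0)) ≤ δ) :
    Tendsto (fun m =>
        (∑' k : ℕ, ∑' l : ℕ,
            ((k+1 : ℕ):ℝ) * q m ((k+1)+(l+1))
              * (Nat.choose ((k+1)+(l+1)) (l+1) : ℝ)
              * (1 - π m)^(k+1) * (π m)^(l+1))
          / (∑' k : ℕ, q m k * (1 - (1 - π m)^k)))
      atTop (nhds (σ^2)) := by
  have hp0 : ∀ m, 0 < π m := fun m => (hπpos m).1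
  have hp1 : ∀ m, π m < 1 := fun m => (hπpos m).2
  have hq0 : ∀ m, Summable (q m) := by
    intro m
    by_contra h
    have := h1 m
    rw [tsum_eq_zero_of_not_summable h] at this
    norm_num at this
  set V : ℕ → ℝ := fun m => ∑' k : ℕ, (k:ℝ)*((k:ℝ)-1)*q m k with hV
  set W : ℕ → ℝ := fun m => ∑' n : ℕ, q m n * ((n:ℝ)*(1-(1-π m)^(n-1))) with hW
  set D : ℕ → ℝ := fun m => ∑' k : ℕ, q m k * (1-(1-π m)^k) with hD
  have hev1 : ∀ᶠ m in atTop, Summable (fun k : ℕ => (k:ℝ) * q m k) := by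
    filter_upwards [hη.eventually (eventually_gt_nhds (by norm_num : (-1:ℝ) < 0))] with m hm
    by_contra h
    have := hmean m
    rw [tsum_eq_zero_of_not_summable h] at this
    linarith
  have hevV : ∀ᶠ m in atTop, Summable (fun k : ℕ => (k:ℝ)*((k:ℝ)-1)*q m k) := by
    have hpos : (0:ℝ) < σ^2 := by positivity
    filter_upwards [hvar.eventually (eventually_gt_nhds (half_lt_self hpos))] with m hm
    by_contra h
    have hm' : σ^2/2 < ∑' k : ℕ, (k:ℝ)*((k:ℝ)-1)*q m k := hm
    rw [tsum_eq_zero_of_not_summable h] at hm'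
    linarith
  have hS2of : ∀ m, Summable (fun k : ℕ => (k:ℝ) * q m k) →
      Summable (fun k : ℕ => (k:ℝ)*((k:ℝ)-1)*q m k) →
      Summable (fun k : ℕ => (k:ℝ)^2 * q m k) := by
    intro m hS1 hSV
    have : (fun k : ℕ => (k:ℝ)^2 * q m k)
        = fun k : ℕ => (k:ℝ)*((k:ℝ)-1)*q m k + (k:ℝ)*q m k := by
      funext k; ring
    rw [this]
    exact hSV.add hS1
  -- denominator convergence
  have hDp : Tendsto (fun m => D m / π m) atTop (𝓝 1) := by
    have l1 : Tendsto (fun m => 1 + η m) atTop (𝓝 (1+0)) := tendsto_const_nhds.add hη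
    have l2 : Tendsto (fun m => (1 + η m) - π m * (V m + (1 + η m))) atTop
        (𝓝 ((1+0) - 0 * (σ^2 + (1+0)))) := l1.sub (hπ.mul (hvar.add l1))
    apply tendsto_of_tendsto_of_tendsto_of_le_of_le' (f := fun m => D m / π m)
      (g := fun m => (1 + η m) - π m * (V m + (1 + η m))) (h := fun m => 1 + η m)
      (by simpa using l2) (by simpa using l1)
    · filter_upwards [hev1, hevV] with m hS1 hSV
      have hS2 := hS2of m hS1 hSV
      have hB : ∑' k : ℕ, (k:ℝ)^2 * q m k = V m + (1 + η m) := by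
        have : (fun k : ℕ => (k:ℝ)^2 * q m k)
            = fun k : ℕ => (k:ℝ)*((k:ℝ)-1)*q m k + (k:ℝ)*q m k := by funext k; ring
        rw [this, Summable.tsum_add hSV hS1, hmean m]
      have hlb := Dlb (q m) (π m) (hq m) (hp0 m).le (hp1 m).le (hq0 m) hS1 hS2
      rw [hB, hmean m] at hlb
      rw [le_div_iff₀ (hp0 m)]
      nlinarith [hlb]
    · filter_upwards [hev1] with m hS1
      have hub := Dub (q m) (π m) (hq m) (hp0 m).le (hp1 m).le (hq0 m) hS1
      rw [hmean m] at hub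
      rw [div_le_iff₀ (hp0 m)]
      nlinarith [hub]
  -- numerator convergence
  have hNp : Tendsto (fun m => (1 - π m) * W m / π m) atTop (𝓝 (σ^2)) := by
    rw [Metric.tendsto_nhds]
    intro ε hε
    obtain ⟨n₀, hn₀⟩ := hui (ε/8) (by positivity)
    set δ : ℝ := ε/(8*((n₀:ℝ)^3 + σ^2 + 2 + ε)) with hδ
    have hδpos : 0 < δ := by positivity
    have hVclose := hvar.eventually (Metric.ball_mem_nhds (σ^2) (by positivity : (0:ℝ) < ε/8))
    filter_upwards [hev1, hevV, hVclose, hπ.eventually (eventually_lt_nhds hδpos)]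
      with m hS1 hSV hVc hpδ
    have hS2 := hS2of m hS1 hSV
    have hp := hp0 m
    have hpd : π m ≤ δ := hpδ.le
    rw [Real.dist_eq] at hVc
    have hWub := Wub (q m) (π m) (hq m) hp.le (hp1 m).le hS2 hSV
    have hWlb := Wlb (q m) (π m) (hq m) hp.le (hp1 m).le (hq0 m) (h1 m) hS2 hSV n₀ (ε/8)
      (by positivity) (hn₀ m)
    have hWnn : 0 ≤ W m := tsum_nonneg (fun n => mul_nonneg (hq m n)
      (mul_nonneg (Nat.cast_nonneg n) (by
        have := pow_le_one₀ (by linarith [hp1 m] : (0:ℝ) ≤ 1 - π m) (by linarith [hp] : 1 - π m ≤ 1) (n := n-1)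
        linarith)))
    have hVnn : 0 ≤ V m := tsum_nonneg (fun k => by
      rcases Nat.eq_zero_or_pos k with h | h
      · simp [h]
      · have h1k : (1:ℝ) ≤ k := by exact_mod_cast h
        exact mul_nonneg (mul_nonneg (by linarith : (0:ℝ) ≤ (k:ℝ))
          (by linarith : (0:ℝ) ≤ (k:ℝ)-1)) (hq m k))
    have hVub : V m ≤ σ^2 + ε/8 := by cases abs_lt.mp hVc; linarith
    -- bounds on W/p
    have e1 : W m / π m ≤ V m := by
      rw [div_le_iff₀ hp]
      nlinarith [hWub]
    have e2 : V m - (π m * (n₀:ℝ)^3 + ε/8) ≤ W m / π m := by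
      rw [le_div_iff₀ hp]
      nlinarith [hWlb]
    have hWsmall : W m ≤ δ * (σ^2 + ε/8) := by
      have h2 : π m * V m ≤ δ * (σ^2 + ε/8) := mul_le_mul hpd hVub hVnn hδpos.le
      have : W m ≤ π m * V m := hWub
      linarith
    have hkey : (1 - π m) * W m / π m = W m / π m - W m := by
      field_simp
    rw [Real.dist_eq, hkey]
    have hpn₀ : π m * (n₀:ℝ)^3 ≤ δ * (n₀:ℝ)^3 :=
      mul_le_mul_of_nonneg_right hpd (by positivity)
    have hδb : δ * ((n₀:ℝ)^3 + σ^2 + 2 + ε) = ε/8 := by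
      rw [hδ]; field_simp
    have hWpnn : 0 ≤ W m / π m := div_nonneg hWnn hp.le
    have hδe : δ * (n₀:ℝ)^3 + δ * (σ^2 + ε/8) ≤ ε/8 := by
      have haux : 0 ≤ δ * (2 + 7*(ε/8)) := mul_nonneg hδpos.le (by linarith)
      nlinarith [hδb, haux]
    rw [abs_lt]
    obtain ⟨hVc1, hVc2⟩ := abs_lt.mp hVc
    constructor
    · linarith [e2, hpn₀, hVc1, hWsmall, hδe]
    · linarith [e1, hVc2, hWnn]
  -- combine
  have hfinal : Tendsto (fun m => ((1 - π m) * W m / π m) / (D m / π m)) atTop (𝓝 (σ^2)) := by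
    have := hNp.div hDp one_ne_zero
    rw [div_one] at this
    exact this
  apply hfinal.congr'
  filter_upwards [hev1, hevV] with m hS1 hSV
  have hS2 := hS2of m hS1 hSV
  have hnum : (∑' k : ℕ, ∑' l : ℕ,
      ((k+1 : ℕ):ℝ) * q m ((k+1)+(l+1)) * (Nat.choose ((k+1)+(l+1)) (l+1) : ℝ)
        * (1 - π m)^(k+1) * (π m)^(l+1)) = (1 - π m) * W m := by
    rw [L3 (q m) (hq m) (π m) (hp0 m).le (hp1 m).le hS2]
    rw [hW]
    rw [← tsum_mul_left]
    apply tsum_congr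
    intro n
    ring
  rw [hnum]
  rcases eq_or_ne (D m) 0 with h | h
  · have h' : (∑' (k:ℕ), q m k * (1 - (1 - π m)^k)) = 0 := h
    rw [h, h', zero_div, div_zero, div_zero]
  · have hpne : π m ≠ 0 := (hp0 m).ne'
    field_simp
    have h'' : (∑' (k:ℕ), q m k * (1 - (1 - π m)^k)) = D m := rfl
    rw [h'', mul_div_assoc, div_self h, mul_one]
end
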